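/- arXiv:2502.05257 — 2 statements merged into one kernel-verified Lean document; each statement's English description precedes it below -/
import Mathlib

section
/- Let A be a commutative ring and I ⊆ A a finitely presented nilpotent ideal such that the quotient ring A/I is coherent. Then A is coherent. -/
set_option maxHeartbeats 1600000
set_option synthInstance.maxHeartbeats 400000

/-- A commutative ring is *coherent* if every finitely generated ideal is
finitely presented as a module. -/
def IsCoherentRing (A : Type*) [CommRing A] : Prop :=
  ∀ I : Ideal A, I.FG → Module.FinitePresentation A I

namespace CoherentNilpotentAux

open Function LinearMap

section helpers

variable {R : Type*} [CommRing R]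

lemma fp_of_subsingleton {M : Type*} [AddCommGroup M] [Module R M] [Subsingleton M] :
    Module.FinitePresentation R M :=
  Module.finitePresentation_of_surjective (0 : R →ₗ[R] M)
    (fun y => ⟨0, Subsingleton.elim _ _⟩)
    (by rw [LinearMap.ker_zero]; exact Module.Finite.fg_top)

lemma fp_equiv {M N : Type*} [AddCommGroup M] [Module R M] [AddCommGroup N] [Module R N]
    (e : M ≃ₗ[R] N) (h : Module.FinitePresentation R M) : Module.FinitePresentation R N :=
  haveI := h
  Module.finitePresentation_of_surjective e.toLinearMap e.surjective
    (by rw [LinearEquiv.ker]; exact Submodule.fg_bot)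

lemma coh_of_subsingleton [Subsingleton R] : IsCoherentRing R := by
  intro I _
  haveI : Subsingleton I := ⟨fun a b => Subtype.ext (Subsingleton.elim _ _)⟩
  exact fp_of_subsingleton

/-- Over a coherent ring, every f.g. submodule of a finite free module is f.p. -/
lemma coh_free (hcoh : IsCoherentRing R) :
    ∀ (n : ℕ) (N : Submodule R (Fin n → R)), N.FG → Module.FinitePresentation R N := by
  intro n
  induction n with
  | zero =>
    intro N _
    haveI : Subsingleton (Fin 0 → R) := ⟨fun a b => funext (fun i => i.elim0)⟩
    haveI : Subsingleton N := ⟨fun a b => Subtype.ext (Subsingleton.elim _ _)⟩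
    exact fp_of_subsingleton
  | succ n ih =>
    intro N hN
    let π : (Fin (n + 1) → R) →ₗ[R] (Fin n → R) := LinearMap.funLeft R R Fin.succ
    let f : N →ₗ[R] N.map π := π.restrict (fun x hx => Submodule.mem_map_of_mem hx)
    have hfsurj : Surjective f := by
      rintro ⟨y, x, hx, rfl⟩
      exact ⟨⟨x, hx⟩, rfl⟩
    haveI hfp_img : Module.FinitePresentation R (N.map π) := ih (N.map π) (hN.map π)
    haveI : Module.Finite R N := Module.Finite.iff_fg.mpr hN
    have hKfg : (LinearMap.ker f).FG := Module.FinitePresentation.fg_ker f hfsurj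
    -- embed ker f into R via evaluation at 0
    let g : LinearMap.ker f →ₗ[R] R :=
      (LinearMap.proj 0).comp (N.subtype.comp (LinearMap.ker f).subtype)
    have key : ∀ (z) (hzN : z ∈ N) (hz : f ⟨z, hzN⟩ = 0) (i : Fin n), z i.succ = 0 := by
      intro z hzN hz i
      exact congr_fun (congr_arg Subtype.val hz) i
    have hginj : Injective g := by
      rintro ⟨⟨x, hxN⟩, hxK⟩ ⟨⟨y, hyN⟩, hyK⟩ hxy
      have h0 : x 0 = y 0 := hxy
      refine Subtype.ext (Subtype.ext (funext (fun i => ?_)))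
      refine Fin.cases h0 (fun j => ?_) i
      show x j.succ = y j.succ
      rw [key x hxN hxK j, key y hyN hyK j]
    have hrfg : (LinearMap.range g).FG := by
      haveI : Module.Finite R (LinearMap.ker f) := Module.Finite.iff_fg.mpr hKfg
      rw [LinearMap.range_eq_map]
      exact Submodule.FG.map _ (Module.Finite.iff_fg.mp inferInstance)
    haveI hfp_range : Module.FinitePresentation R (LinearMap.range g) :=
      hcoh (LinearMap.range g) hrfg
    haveI hfp_ker : Module.FinitePresentation R (LinearMap.ker f) :=
      fp_equiv (M := LinearMap.range g) (N := LinearMap.ker f)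
        (LinearEquiv.ofInjective g hginj).symm hfp_range
    exact Module.finitePresentation_of_ker f hfsurj

/-- Over a coherent ring, every f.g. submodule of a f.p. module is f.p. -/
lemma coh_sub (hcoh : IsCoherentRing R) {M : Type*} [AddCommGroup M] [Module R M]
    (hM : Module.FinitePresentation R M) (N : Submodule R M) (hN : N.FG) :
    Module.FinitePresentation R N := by
  haveI := hM
  obtain ⟨n, σ, hσ⟩ := Module.Finite.exists_fin' R M
  have hkσ : (LinearMap.ker σ).FG := Module.FinitePresentation.fg_ker σ hσ
  set N' : Submodule R (Fin n → R) := N.comap σ with hN'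
  have hkle : LinearMap.ker σ ≤ N' := fun x hx => by
    simp only [N', Submodule.mem_comap]
    rw [LinearMap.mem_ker] at hx
    rw [hx]; exact N.zero_mem
  have hN'fg : N'.FG := by
    apply Submodule.fg_of_fg_map_of_fg_inf_ker σ
    · rwa [Submodule.map_comap_eq_of_surjective hσ]
    · rwa [inf_eq_right.mpr hkle]
  have hN'fp : Module.FinitePresentation R N' := coh_free hcoh n N' hN'fg
  let σ' : N' →ₗ[R] N := σ.restrict (fun x hx => hx)
  have hσ'surj : Surjective σ' := by
    rintro ⟨y, hy⟩
    obtain ⟨x, rfl⟩ := hσ y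
    exact ⟨⟨x, hy⟩, rfl⟩
  have hkσ' : (LinearMap.ker σ').FG := by
    apply Submodule.fg_of_fg_map_injective N'.subtype (Submodule.injective_subtype N')
    have : (LinearMap.ker σ').map N'.subtype = LinearMap.ker σ := by
      apply le_antisymm
      · rintro _ ⟨⟨x, hxN'⟩, hx, rfl⟩
        exact congr_arg Subtype.val (show σ' ⟨x, hxN'⟩ = 0 from hx)
      · intro x hx
        refine ⟨⟨x, hkle hx⟩, ?_, rfl⟩
        exact Subtype.ext (show σ x = 0 from hx)
    rwa [this]
  haveI := hN'fp
  exact Module.finitePresentation_of_surjective σ' hσ'surj hkσ'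

end helpers

section tower

variable {A B M : Type*} [CommRing A] [CommRing B] [Algebra A B]
  [AddCommGroup M] [Module A M] [Module B M] [IsScalarTower A B M]

lemma fg_restrict (hs : Surjective (algebraMap A B)) {p : Submodule B M} (hp : p.FG) :
    (p.restrictScalars A).FG := by
  obtain ⟨S, hS⟩ := hp
  exact ⟨S, by rw [← hS, Submodule.restrictScalars_span A B hs]⟩

lemma fp_down (hs : Surjective (algebraMap A B)) (h : Module.FinitePresentation A M) :
    Module.FinitePresentation B M := by
  classical
  haveI := h
  obtain ⟨n, f, hf⟩ := Module.Finite.exists_fin' A M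
  obtain ⟨T, hT⟩ := Module.FinitePresentation.fg_ker f hf
  let p : (Fin n → A) →ₗ[A] (Fin n → B) := (Algebra.linearMap A B).compLeft (Fin n)
  have hpsurj : Surjective p := by
    intro c
    choose a ha using fun i => hs (c i)
    exact ⟨a, funext ha⟩
  set v : Fin n → M := fun i => f (fun j => if i = j then 1 else 0) with hv
  let g : (Fin n → B) →ₗ[B] M := Fintype.linearCombination B v
  have hgp : ∀ a : Fin n → A, g (p a) = f a := by
    intro a
    rw [LinearMap.pi_apply_eq_sum_univ f a]
    simp only [g, Fintype.linearCombination_apply]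
    refine Finset.sum_congr rfl (fun i _ => ?_)
    show (algebraMap A B (a i)) • v i = _
    rw [algebraMap_smul]
  have hgsurj : Surjective g := by
    intro m
    obtain ⟨a, rfl⟩ := hf m
    exact ⟨p a, hgp a⟩
  have hker : LinearMap.ker g = Submodule.span B (p '' T) := by
    apply le_antisymm
    · intro c hc
      obtain ⟨a, rfl⟩ := hpsurj c
      have ha : a ∈ LinearMap.ker f := by
        rw [LinearMap.mem_ker, ← hgp a]; exact hc
      rw [← hT] at ha
      have : p a ∈ Submodule.map p (Submodule.span A (T : Set (Fin n → A))) :=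
        Submodule.mem_map_of_mem ha
      rw [Submodule.map_span] at this
      exact Submodule.span_le_restrictScalars A B _ this
    · rw [Submodule.span_le]
      rintro _ ⟨t, ht, rfl⟩
      have : t ∈ LinearMap.ker f := by rw [← hT]; exact Submodule.subset_span ht
      rw [SetLike.mem_coe, LinearMap.mem_ker, hgp]
      exact this
  exact Module.finitePresentation_of_free_of_surjective g hgsurj
    (by rw [hker, ← Finset.coe_image]; exact ⟨T.image p, rfl⟩)

/-- the identity equivalence between a `B`-submodule and its restriction of scalars -/
def restrictEquiv (q : Submodule B M) : (q.restrictScalars A) ≃ₗ[A] q where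
  toFun := fun x => ⟨x.1, x.2⟩
  invFun := fun x => ⟨x.1, x.2⟩
  left_inv := fun x => rfl
  right_inv := fun x => rfl
  map_add' := fun x y => rfl
  map_smul' := fun a x => rfl

lemma fp_up (hs : Surjective (algebraMap A B)) (hker : (RingHom.ker (algebraMap A B)).FG)
    (h : Module.FinitePresentation B M) : Module.FinitePresentation A M := by
  classical
  haveI := h
  have fpBA : Module.FinitePresentation A B := by
    apply Module.finitePresentation_of_surjective (Algebra.linearMap A B) hs
    convert hker using 1
    exact Iff.rfl
  haveI := fpBA
  obtain ⟨n, g, hg⟩ := Module.Finite.exists_fin' B M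
  have hkg : (LinearMap.ker g).FG := Module.FinitePresentation.fg_ker g hg
  haveI : Module.FinitePresentation A (Fin n → B) := by
    obtain ⟨k, q, hq⟩ := Module.Finite.exists_fin' A B
    have hkq : (LinearMap.ker q).FG := Module.FinitePresentation.fg_ker q hq
    let P : (Fin n → Fin k → A) →ₗ[A] (Fin n → B) := q.compLeft (Fin n)
    have hPsurj : Surjective P := by
      intro c
      choose a ha using fun i => hq (c i)
      exact ⟨a, funext ha⟩
    have hPker : LinearMap.ker P = Submodule.pi Set.univ (fun _ : Fin n => LinearMap.ker q) := by
      ext h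
      simp only [LinearMap.mem_ker, Submodule.mem_pi, Set.mem_univ, forall_true_left]
      constructor
      · intro hh i; exact congr_fun hh i
      · intro hh; funext i; exact hh i
    haveI : Module.FinitePresentation A (Fin n → Fin k → A) :=
      Module.finitePresentation_of_projective A _
    exact Module.finitePresentation_of_surjective P hPsurj
      (by rw [hPker]; exact Submodule.fg_pi (fun _ => hkq))
  refine Module.finitePresentation_of_surjective (g.restrictScalars A) hg ?_
  have : LinearMap.ker (g.restrictScalars A) = (LinearMap.ker g).restrictScalars A := rfl
  rw [this]
  exact fg_restrict hs hkg

end tower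

lemma coh_equiv {A B : Type*} [CommRing A] [CommRing B] (e : A ≃+* B)
    (h : IsCoherentRing A) : IsCoherentRing B := by
  classical
  intro Jb hJb
  letI : Algebra A B := e.toRingHom.toAlgebra
  have hs : Surjective (algebraMap A B) := e.surjective
  letI : Module A Jb := Module.compHom _ (e.toRingHom)
  haveI : IsScalarTower A B Jb := ⟨fun a b x => by
    change (e a * b) • x = e a • (b • x)
    rw [mul_smul]⟩
  set Ja : Ideal A := Jb.comap e with hJa
  have hJafg : Ja.FG := by
    obtain ⟨S, hS⟩ := hJb
    refine ⟨S.image ⇑e.symm, ?_⟩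
    rw [Finset.coe_image]
    apply le_antisymm
    · rw [Ideal.span_le]
      rintro _ ⟨b, hb, rfl⟩
      have hbJ : b ∈ Jb := by rw [← hS]; exact Ideal.subset_span hb
      exact Ideal.mem_comap.mpr (by simpa using hbJ)
    · intro x hx
      have h1 : e x ∈ Ideal.span (S : Set B) := by rw [hS]; exact Ideal.mem_comap.mp hx
      have h3 := Ideal.mem_map_of_mem (e.symm : B →+* A) h1
      rw [Ideal.map_span] at h3
      simpa using h3
  have hJafp : Module.FinitePresentation A Ja := h Ja hJafg
  let eq : Ja ≃ₗ[A] Jb :=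
    { toFun := fun x => ⟨e x.1, x.2⟩
      invFun := fun y => ⟨e.symm y.1, by
        have : (e (e.symm y.1) : B) ∈ Jb := by rw [e.apply_symm_apply]; exact y.2
        exact this⟩
      left_inv := fun x => Subtype.ext (e.symm_apply_apply x.1)
      right_inv := fun y => Subtype.ext (e.apply_symm_apply y.1)
      map_add' := fun x y => Subtype.ext (map_add e x.1 y.1)
      map_smul' := fun a x => Subtype.ext (by
        change e (a * x.1) = e a * e x.1
        rw [map_mul]) }
  have hfpJb : Module.FinitePresentation A Jb := fp_equiv eq hJafp
  exact fp_down hs hfpJb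

/-- A surjection from an ideal onto its image in a quotient ring. -/
lemma theta_exists {A : Type*} [CommRing A] (K W : Ideal A) :
    ∃ θ : W →ₗ[A] ((W.map (Ideal.Quotient.mk K)).restrictScalars A),
      Surjective θ ∧ (LinearMap.ker θ).map W.subtype = W ⊓ K := by
  refine ⟨LinearMap.codRestrict _ ((Algebra.linearMap A (A ⧸ K)).comp W.subtype)
      (fun x => Ideal.mem_map_of_mem _ x.2), ?_, ?_⟩
  · rintro ⟨y, hy⟩
    obtain ⟨x, hx, rfl⟩ := Ideal.mem_map_iff_of_surjective _ Ideal.Quotient.mk_surjective |>.mp hy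
    exact ⟨⟨x, hx⟩, rfl⟩
  · apply le_antisymm
    · rintro _ ⟨⟨x, hxW⟩, hx, rfl⟩
      have : Ideal.Quotient.mk K x = 0 := congr_arg Subtype.val hx
      exact ⟨hxW, Ideal.Quotient.eq_zero_iff_mem.mp this⟩
    · rintro x ⟨hxW, hxK⟩
      exact ⟨⟨x, hxW⟩, Subtype.ext (Ideal.Quotient.eq_zero_iff_mem.mpr hxK), rfl⟩

/-- f.g. submodules of a f.p. module annihilated by a f.g. ideal `J` with `A ⧸ J` coherent
are f.p. -/
lemma submodule_fp {A : Type*} [CommRing A] (J : Ideal A) (hJfg : J.FG)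
    (hcohq : IsCoherentRing (A ⧸ J)) {M : Type*} [AddCommGroup M] [Module A M]
    (hann : Module.IsTorsionBySet A M (J : Set A))
    (hfpM : Module.FinitePresentation A M) (N : Submodule A M) (hN : N.FG) :
    Module.FinitePresentation A N := by
  letI instB : Module (A ⧸ J) M := hann.module
  haveI : IsScalarTower A (A ⧸ J) M := hann.isScalarTower (S := A)
  have hs : Surjective (algebraMap A (A ⧸ J)) := Ideal.Quotient.mk_surjective
  have hfpB : Module.FinitePresentation (A ⧸ J) M := fp_down hs hfpM
  let N_B : Submodule (A ⧸ J) M :=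
    { carrier := N
      add_mem' := fun h1 h2 => N.add_mem h1 h2
      zero_mem' := N.zero_mem
      smul_mem' := by
        rintro b x hx
        obtain ⟨a, rfl⟩ := hs b
        rw [algebraMap_smul]
        exact N.smul_mem a hx }
  have hNBfg : N_B.FG := by
    obtain ⟨S, hS⟩ := hN
    refine ⟨S, ?_⟩
    apply Submodule.restrictScalars_injective A
    rw [Submodule.restrictScalars_span A (A ⧸ J) hs, hS]
    rfl
  have hfpNB : Module.FinitePresentation (A ⧸ J) N_B := coh_sub hcohq hfpB N_B hNBfg
  have hkerfg : (RingHom.ker (algebraMap A (A ⧸ J))).FG := by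
    rw [Ideal.Quotient.algebraMap_eq, Ideal.mk_ker]; exact hJfg
  have h2 : Module.FinitePresentation A (N_B.restrictScalars A) :=
    fp_equiv (restrictEquiv N_B).symm (fp_up hs hkerfg hfpNB)
  exact h2

universe u

lemma aux : ∀ (m : ℕ) (A : Type u) [CommRing A] (I : Ideal A),
    Module.FinitePresentation A I → I ^ m = ⊥ → IsCoherentRing (A ⧸ I) → IsCoherentRing A := by
  intro m
  induction m with
  | zero =>
    intro A _ I hfp hpow hcoh
    have h1 : (1 : A) ∈ (⊥ : Ideal A) := by
      rw [← hpow, pow_zero, Ideal.one_eq_top]; exact Submodule.mem_top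
    haveI : Subsingleton A := subsingleton_of_zero_eq_one ((Ideal.mem_bot.mp h1).symm)
    exact coh_of_subsingleton
  | succ m ih =>
    intro A _ I hfp hpow hcoh
    haveI := hfp
    have hIfg : I.FG := Module.Finite.iff_fg.mp inferInstance
    set J : Ideal A := I ^ m with hJ
    have hJfg : J.FG := Submodule.FG.pow hIfg m
    -- the surjection I → I.map (mk J)
    obtain ⟨θ, hθs, hθk⟩ := theta_exists J I
    have hIJfg : (I ⊓ J).FG := by
      cases m with
      | zero =>
        have : I ⊓ J = I := by rw [hJ, pow_zero, Ideal.one_eq_top]; exact inf_top_eq I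
        rwa [this]
      | succ m' =>
        have hle : J ≤ I := hJ ▸ Ideal.pow_le_self (Nat.succ_ne_zero m')
        have : I ⊓ J = J := inf_eq_right.mpr hle
        rwa [this]
    have hkerfg : (LinearMap.ker θ).FG := by
      apply Submodule.fg_of_fg_map_injective I.subtype (Submodule.injective_subtype I)
      rwa [hθk]
    have hfpIm : Module.FinitePresentation A ((I.map (Ideal.Quotient.mk J)).restrictScalars A) :=
      Module.finitePresentation_of_surjective θ hθs hkerfg
    -- A ⧸ J is coherent, by the induction hypothesis
    have hcohB : IsCoherentRing (A ⧸ J) := by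
      apply ih (A ⧸ J) (I.map (Ideal.Quotient.mk J))
      · exact fp_down Ideal.Quotient.mk_surjective
          (fp_equiv (restrictEquiv (I.map (Ideal.Quotient.mk J))) hfpIm)
      · rw [← Ideal.map_pow, ← hJ, Ideal.map_quotient_self]
      · cases m with
        | zero =>
          haveI : Subsingleton (A ⧸ J) := by
            refine subsingleton_of_zero_eq_one ?_
            have : (1 : A) ∈ J := by rw [hJ, pow_zero, Ideal.one_eq_top]; exact Submodule.mem_top
            exact ((Ideal.Quotient.eq_zero_iff_mem).mpr this).symm
          haveI : Subsingleton ((A ⧸ J) ⧸ (I.map (Ideal.Quotient.mk J))) :=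
            Ideal.Quotient.mk_surjective.subsingleton
          exact coh_of_subsingleton
        | succ m' =>
          have hle : J ≤ I := hJ ▸ Ideal.pow_le_self (Nat.succ_ne_zero m')
          exact coh_equiv
            (((DoubleQuot.quotQuotEquivQuotSup J I).trans
              (Ideal.quotEquivOfEq (sup_eq_right.mpr hle))).symm) hcoh
    -- J annihilates I
    have hann : Module.IsTorsionBySet A I (J : Set A) := by
      rintro x ⟨a, ha⟩
      apply Subtype.ext
      show a • (x : A) = 0
      have hmem : a * (x : A) ∈ I ^ (m + 1) := by
        rw [pow_succ]
        exact Ideal.mul_mem_mul ha x.2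
      rw [hpow] at hmem
      simpa using hmem
    -- every f.g. ideal contained in I is f.p.
    have key : ∀ (N : Ideal A), N.FG → N ≤ I → Module.FinitePresentation A N := by
      intro N hNfg hNI
      set N₀ : Submodule A I := Submodule.comap (Submodule.subtype I) N with hN₀
      have hmap : N₀.map I.subtype = N := by
        rw [Submodule.map_comap_eq, Submodule.range_subtype]
        exact inf_eq_right.mpr hNI
      have hN₀fg : N₀.FG :=
        Submodule.fg_of_fg_map_injective I.subtype (Submodule.injective_subtype I)
          (by rwa [hmap])
      have h₀ : Module.FinitePresentation A N₀ :=
        submodule_fp J hJfg hcohB hann hfp N₀ hN₀fg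
      exact fp_equiv ((Submodule.equivMapOfInjective I.subtype
        (Submodule.injective_subtype I) N₀).trans (LinearEquiv.ofEq _ _ hmap)) h₀
    -- conclusion
    intro W hW
    obtain ⟨ψ, hψs, hψk⟩ := theta_exists I W
    have htfp : Module.FinitePresentation A ((W.map (Ideal.Quotient.mk I)).restrictScalars A) := by
      have h1 : Module.FinitePresentation (A ⧸ I) (W.map (Ideal.Quotient.mk I)) :=
        hcoh _ (hW.map _)
      exact fp_equiv (restrictEquiv (W.map (Ideal.Quotient.mk I))).symm
        (fp_up Ideal.Quotient.mk_surjective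
          (by rw [Ideal.Quotient.algebraMap_eq, Ideal.mk_ker]; exact hIfg) h1)
    haveI := htfp
    haveI : Module.Finite A W := Module.Finite.iff_fg.mpr hW
    have hkψ : (LinearMap.ker ψ).FG := Module.FinitePresentation.fg_ker ψ hψs
    have hWI : (W ⊓ I).FG := by rw [← hψk]; exact hkψ.map _
    have hfker : Module.FinitePresentation A (LinearMap.ker ψ) := by
      have hfpWI := key (W ⊓ I) hWI inf_le_right
      exact fp_equiv ((Submodule.equivMapOfInjective W.subtype
        (Submodule.injective_subtype W) _).trans (LinearEquiv.ofEq _ _ hψk)).symm hfpWI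
    haveI := hfker
    exact Module.finitePresentation_of_ker ψ hψs

end CoherentNilpotentAux

/-- If `I ⊆ A` is a finitely presented nilpotent ideal such that `A/I` is coherent,
then `A` is coherent. -/
theorem coherent_of_nilpotent_extension {A : Type*} [CommRing A] (I : Ideal A)
    (hfp : Module.FinitePresentation A I)
    (hnil : IsNilpotent I)
    (hcoh : IsCoherentRing (A ⧸ I)) :
    IsCoherentRing A := by
  obtain ⟨m, hm⟩ := hnil
  exact CoherentNilpotentAux.aux m A I hfp (by rw [hm]; rfl) hcoh
end

section
/- Let A be a non-negatively graded commutative ring with degree-zero part A⁰ and augmentation ideal A₊, and let M be a non-negatively graded A-module. If the A⁰-module M/(A₊·M) is finitely generated, then M is finitely generated as an A-module. -/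
open DirectSum

section Aux

variable {A M : Type*} [CommRing A] [AddCommGroup M] [Module A M]
    (𝒜 : ℕ → AddSubgroup A) (ℳ : ℕ → AddSubgroup M)
    [GradedRing 𝒜] [DirectSum.Decomposition ℳ] [SetLike.GradedSMul 𝒜 ℳ]

/-- Projection of a homogeneous scalar multiple: if the relevant components of `x`
lie in `N`, so does the `n`-th component of `a • x`. -/
lemma gnf_proj_homog_smul_mem (N : Submodule A M) {i : ℕ} {a : A} (ha : a ∈ 𝒜 i) (x : M)
    (n : ℕ) (hx : ∀ j, i + j = n → (DirectSum.decompose ℳ x j : M) ∈ N) :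
    (DirectSum.decompose ℳ (a • x) n : M) ∈ N := by
  classical
  have hx' : a • x = ∑ j ∈ (DirectSum.decompose ℳ x).support,
      a • (DirectSum.decompose ℳ x j : M) := by
    rw [← Finset.smul_sum, DirectSum.sum_support_decompose]
  rw [hx', DirectSum.decompose_sum, DFinsupp.finset_sum_apply, AddSubmonoidClass.coe_finset_sum]
  refine Submodule.sum_mem _ fun j hj => ?_
  have hmem : a • (DirectSum.decompose ℳ x j : M) ∈ ℳ (i + j) :=
    SetLike.GradedSMul.smul_mem (A := 𝒜) (B := ℳ) ha (SetLike.coe_mem _)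
  by_cases hij : i + j = n
  · rw [← hij, DirectSum.decompose_of_mem_same ℳ hmem]
    exact N.smul_mem a (hx j hij)
  · rw [DirectSum.decompose_of_mem_ne ℳ hmem hij]
    exact N.zero_mem

include 𝒜 in
/-- Projection of an arbitrary scalar multiple. -/
lemma gnf_proj_smul_mem (N : Submodule A M) (a : A) (x : M)
    (hx : ∀ j, (DirectSum.decompose ℳ x j : M) ∈ N) (n : ℕ) :
    (DirectSum.decompose ℳ (a • x) n : M) ∈ N := by
  induction a using DirectSum.Decomposition.inductionOn 𝒜 with
  | zero => simpa using N.zero_mem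
  | homogeneous m =>
      exact gnf_proj_homog_smul_mem 𝒜 ℳ N m.2 x n fun j _ => hx j
  | add a a' hA hA' =>
      rw [add_smul, DirectSum.decompose_add]
      exact N.add_mem hA hA'

include 𝒜 in
/-- The span of a set of homogeneous elements is closed under projections. -/
lemma gnf_span_homog_proj_mem {T : Set M} (hT : ∀ t ∈ T, ∃ i, t ∈ ℳ i)
    {x : M} (hx : x ∈ Submodule.span A T) (n : ℕ) :
    (DirectSum.decompose ℳ x n : M) ∈ Submodule.span A T := by
  induction hx using Submodule.span_induction generalizing n with
  | mem t ht =>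
      obtain ⟨i, hi⟩ := hT t ht
      by_cases hin : i = n
      · rw [← hin, DirectSum.decompose_of_mem_same ℳ hi]
        exact Submodule.subset_span ht
      · rw [DirectSum.decompose_of_mem_ne ℳ hi hin]
        exact Submodule.zero_mem _
  | zero => simpa using Submodule.zero_mem _
  | add y z _ _ hy hz =>
      rw [DirectSum.decompose_add]
      exact Submodule.add_mem _ (hy n) (hz n)
  | smul a y _ hy =>
      exact gnf_proj_smul_mem 𝒜 ℳ _ a y hy n

end Aux

/-- Graded Nakayama for finite generation: if `A` is an `ℕ`-graded commutative
ring with augmentation ideal `A₊` and `M` is a non-negatively graded `A`-module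
whose quotient `M/(A₊·M)` is finitely generated (over `A⁰ = A/A₊`, equivalently
over `A` since `A₊` acts trivially), then `M` is finitely generated over `A`. -/
theorem graded_nakayama_finite {A M : Type*} [CommRing A] [AddCommGroup M] [Module A M]
    (𝒜 : ℕ → AddSubgroup A) (ℳ : ℕ → AddSubgroup M)
    [GradedRing 𝒜] [DirectSum.Decomposition ℳ] [SetLike.GradedSMul 𝒜 ℳ]
    (h : Module.Finite A
      (M ⧸ ((HomogeneousIdeal.irrelevant 𝒜).toIdeal • (⊤ : Submodule A M)))) :
    Module.Finite A M := by
  classical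
  set I : Ideal A := (HomogeneousIdeal.irrelevant 𝒜).toIdeal
  set N₀ : Submodule A M := I • (⊤ : Submodule A M) with hN₀
  -- obtain a finite generating set of the quotient and lift it
  obtain ⟨s, hs⟩ := h.fg_top
  -- lift each generator
  have hsurj : Function.Surjective (N₀.mkQ) := Submodule.mkQ_surjective N₀
  choose lift hlift using hsurj
  -- the finite homogeneous set of all components of lifts
  set T : Finset M := s.biUnion fun q =>
    (DirectSum.decompose ℳ (lift q)).support.image
      (fun i => (DirectSum.decompose ℳ (lift q) i : M)) with hTdef
  have hThomog : ∀ t ∈ (T : Set M), ∃ i, t ∈ ℳ i := by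
    intro t ht
    simp only [hTdef, Finset.coe_biUnion, Set.mem_iUnion, Finset.coe_image,
      Set.mem_image] at ht
    obtain ⟨q, _, i, _, rfl⟩ := ht
    exact ⟨i, SetLike.coe_mem _⟩
  set N : Submodule A M := Submodule.span A (T : Set M) with hNdef
  -- span T together with N₀ is everything
  have hsup : N₀ ⊔ N = ⊤ := by
    rw [← Submodule.map_mkQ_eq_top, eq_top_iff, ← hs, Submodule.span_le]
    intro q hq
    have : lift q ∈ N := by
      have hql : lift q = ∑ i ∈ (DirectSum.decompose ℳ (lift q)).support,
          (DirectSum.decompose ℳ (lift q) i : M) :=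
        (DirectSum.sum_support_decompose ℳ _).symm
      rw [hql]
      refine Submodule.sum_mem _ fun i hi => Submodule.subset_span ?_
      simp only [hTdef, Finset.coe_biUnion, Set.mem_iUnion, Finset.coe_image,
        Set.mem_image]
      exact ⟨q, hq, i, by simpa using hi⟩
    exact ⟨lift q, this, hlift q⟩
  -- strong induction: every homogeneous piece is in N
  have key : ∀ n : ℕ, ∀ m ∈ ℳ n, m ∈ N := by
    intro n
    induction n using Nat.strong_induction_on with
    | _ n ih =>
      intro m hm
      have hmtop : m ∈ N₀ ⊔ N := hsup ▸ Submodule.mem_top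
      obtain ⟨z, hz0, y, hy, rfl⟩ := Submodule.mem_sup.mp hmtop
      -- take the n-th component
      have hproj : (DirectSum.decompose ℳ (z + y) n : M) = z + y :=
        DirectSum.decompose_of_mem_same ℳ hm
      rw [← hproj, DirectSum.decompose_add]
      push_cast
      refine Submodule.add_mem _ ?_ (gnf_span_homog_proj_mem 𝒜 ℳ hThomog hy n)
      -- the component of the element of N₀
      have : ∀ z ∈ N₀, (DirectSum.decompose ℳ z n : M) ∈ N := by
        intro z hz
        refine Submodule.smul_induction_on hz ?_ ?_
        · intro a ha x _
          -- a is in the irrelevant ideal: decompose a into components of degree ≥ 1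
          have ha0 : (DirectSum.decompose 𝒜 a 0 : A) = 0 := ha
          have ha' : a • x = ∑ i ∈ (DirectSum.decompose 𝒜 a).support,
              (DirectSum.decompose 𝒜 a i : A) • x := by
            rw [← Finset.sum_smul, DirectSum.sum_support_decompose]
          rw [ha', DirectSum.decompose_sum, DFinsupp.finset_sum_apply,
            AddSubmonoidClass.coe_finset_sum]
          refine Submodule.sum_mem _ fun i hi => ?_
          have hipos : i ≠ 0 := by
            intro h0
            apply DFinsupp.mem_support_iff.mp hi
            subst h0
            ext
            simpa using ha0
          refine gnf_proj_homog_smul_mem 𝒜 ℳ N (SetLike.coe_mem _) x n fun j hj => ?_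
          have hjn : j < n := by omega
          exact ih j hjn _ (SetLike.coe_mem _)
        · intro x y hx hy
          rw [DirectSum.decompose_add]
          push_cast
          exact Submodule.add_mem _ hx hy
      exact this z hz0
  -- conclude
  refine ⟨⟨T, ?_⟩⟩
  rw [eq_top_iff]
  intro m _
  rw [← DirectSum.sum_support_decompose ℳ m]
  exact Submodule.sum_mem _ fun i _ => key i _ (SetLike.coe_mem _)
end
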